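/- Let r ≥ 1 and n be integers with n ≥ 10r. Then the binomial coefficient C(n+r+1, 2r) satisfies C(n+r+1, 2r) < (n−2r+1)^{n−2r+1} / (n−2r+1)!. -/

import Mathlib

/-- Inequality (3.2): for r ≥ 1 and n ≥ 10r,
C(n+r+1, 2r) < (n−2r+1)^{n−2r+1}/(n−2r+1)!. -/
theorem stmt_9 (r n : ℕ) (hr : 1 ≤ r) (hn : 10 * r ≤ n) :
    ((n + r + 1).choose (2 * r) : ℝ) <
      ((n - 2 * r + 1 : ℕ) : ℝ) ^ (n - 2 * r + 1) / ((n - 2 * r + 1).factorial : ℝ) := by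
  set m : ℕ := n - 2 * r + 1 with hm
  have h1 : 8 * r + 1 ≤ m := by omega
  have hm3 : n + r + 1 = m + 3 * r := by omega
  set s : ℕ := m - 4 * r with hs
  have hsm : m = 4 * r + s := by omega
  have hs2 : 2 ≤ s := by omega
  have key : (n + r + 1).choose (2 * r) * m.factorial < m ^ m := by
    have e1 : (2 * r).factorial * (2 * r + 1).ascFactorial (2 * r) = (4 * r).factorial := by
      have := Nat.factorial_mul_ascFactorial (2 * r) (2 * r)
      rwa [show 2 * r + 2 * r = 4 * r by ring] at this
    have e2 : (4 * r).factorial * (4 * r + 1).ascFactorial s = m.factorial := by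
      have := Nat.factorial_mul_ascFactorial (4 * r) s
      rwa [← hsm] at this
    have hX : (2 * r + 1).ascFactorial (2 * r) ≤ (4 * r) ^ (2 * r) := by
      have := Nat.ascFactorial_le_pow_add (2 * r) (2 * r)
      rwa [show 2 * r + 2 * r = 4 * r by ring] at this
    have hY : (4 * r + 1).ascFactorial s < m ^ s := by
      have := Nat.ascFactorial_lt_pow_add (4 * r) hs2
      rwa [← hsm] at this
    have hC : (n + r + 1).choose (2 * r) * (2 * r).factorial ≤ (m + 3 * r) ^ (2 * r) := by
      calc (n + r + 1).choose (2 * r) * (2 * r).factorial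
          = (n + r + 1).descFactorial (2 * r) := by
            rw [Nat.descFactorial_eq_factorial_mul_choose]; ring
        _ ≤ (n + r + 1) ^ (2 * r) := Nat.descFactorial_le_pow _ _
        _ = (m + 3 * r) ^ (2 * r) := by rw [hm3]
    have hmul : (m + 3 * r) ^ (2 * r) * (4 * r) ^ (2 * r) ≤ (m ^ 2) ^ (2 * r) := by
      rw [← mul_pow]
      apply Nat.pow_le_pow_left
      nlinarith [h1]
    have hpos : 0 < (m + 3 * r) ^ (2 * r) * (4 * r) ^ (2 * r) :=
      Nat.mul_pos (Nat.pow_pos (by omega)) (Nat.pow_pos (by omega))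
    calc (n + r + 1).choose (2 * r) * m.factorial
        = ((n + r + 1).choose (2 * r) * (2 * r).factorial) *
            (2 * r + 1).ascFactorial (2 * r) * (4 * r + 1).ascFactorial s := by
          rw [← e2, ← e1]; ring
      _ ≤ ((m + 3 * r) ^ (2 * r) * (4 * r) ^ (2 * r)) * (4 * r + 1).ascFactorial s := by
          exact Nat.mul_le_mul_right _ (Nat.mul_le_mul hC hX)
      _ < ((m + 3 * r) ^ (2 * r) * (4 * r) ^ (2 * r)) * m ^ s :=
          Nat.mul_lt_mul_of_le_of_lt (le_refl _) hY hpos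
      _ ≤ (m ^ 2) ^ (2 * r) * m ^ s := Nat.mul_le_mul_right _ hmul
      _ = m ^ m := by rw [← pow_mul, ← pow_add]; congr 1; omega
  rw [lt_div_iff₀ (by exact_mod_cast m.factorial_pos)]
  exact_mod_cast key
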